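/- arXiv:2512.18957 — 2 statements merged into one kernel-verified Lean document; each statement's English description precedes it below -/
import Mathlib

section
/- Per-coordinate elliptic potential bound (scalar version): let d^{(1)}, …, d^{(K)} be distributions on a set Z and let μ ∈ Δ(Z) satisfy d^{(k)}(z)/μ(z) ≤ C for all z and k (with μ(z) > 0 whenever some d^{(k)}(z) > 0). Then for every z ∈ Z, ∑_{k=1}^K d^{(k)}(z) / ( ∑_{i<k} d^{(i)}(z) + C·μ(z) ) ≤ O(log K); concretely, the sum is at most 4·log(2K). -/
open Finset

private lemma step_log_bound {a t : ℝ} (ha : 0 ≤ a) (hat : a ≤ t) (ht : 0 < t) :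
    a / t ≤ 2 * (Real.log (t + a) - Real.log t) := by
  have hta : 0 < t + a := by linarith
  have hdiv : 0 < (t + a) / t := div_pos hta ht
  have h1 : 1 - ((t + a) / t)⁻¹ ≤ Real.log ((t + a) / t) :=
    Real.one_sub_inv_le_log_of_pos hdiv
  have hlog : Real.log ((t + a) / t) = Real.log (t + a) - Real.log t :=
    Real.log_div (by positivity) (by positivity)
  have hinv : ((t + a) / t)⁻¹ = t / (t + a) := by rw [inv_div]
  have h2 : 1 - t / (t + a) = a / (t + a) := by field_simp; ring
  have h3 : a / (2 * t) ≤ a / (t + a) := by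
    apply div_le_div_of_nonneg_left ha hta
    linarith
  have key : a / (2 * t) ≤ Real.log (t + a) - Real.log t := by
    rw [← hlog]
    calc a / (2 * t) ≤ a / (t + a) := h3
      _ = 1 - t / (t + a) := h2.symm
      _ = 1 - ((t + a) / t)⁻¹ := by rw [hinv]
      _ ≤ _ := h1
  have h2t : a / (2 * t) = a / t / 2 := by ring
  linarith

private lemma nat_elliptic (a : ℕ → ℝ) (M : ℝ) (hM : 0 < M)
    (ha0 : ∀ i, 0 ≤ a i) (haM : ∀ i, a i ≤ M) :
    ∀ n : ℕ, ∑ k ∈ range n, a k / (∑ i ∈ range k, a i + M)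
      ≤ 2 * (Real.log (∑ i ∈ range n, a i + M) - Real.log M) := by
  intro n
  induction n with
  | zero => simp
  | succ n ih =>
    have hS : 0 ≤ ∑ i ∈ range n, a i := Finset.sum_nonneg fun i _ => ha0 i
    have ht : 0 < ∑ i ∈ range n, a i + M := by linarith
    have hat : a n ≤ ∑ i ∈ range n, a i + M := by linarith [haM n]
    have hstep := step_log_bound (ha0 n) hat ht
    rw [Finset.sum_range_succ, Finset.sum_range_succ]
    have heq : (∑ i ∈ range n, a i + M) + a n = (∑ i ∈ range n, a i + a n) + M := by ring
    rw [heq] at hstep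
    linarith

/-- per-coordinate (scalar) elliptic potential bound: if each
`d^{(k)}(z) ≤ C·μ(z)`, then for every `z`,
`∑_k d^{(k)}(z) / (∑_{i<k} d^{(i)}(z) + C·μ(z)) ≤ 4·log(2K)`. -/
theorem scalar_elliptic_potential
    {Z : Type*} [Fintype Z] (K : ℕ) (hK : 1 ≤ K)
    (d : Fin K → Z → ℝ)
    (hd0 : ∀ k z, 0 ≤ d k z) (hd1 : ∀ k, ∑ z, d k z = 1)
    (μ : Z → ℝ) (hμ0 : ∀ z, 0 ≤ μ z) (hμ1 : ∑ z, μ z = 1)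
    (C : ℝ) (hC : 0 < C)
    (hratio : ∀ k z, d k z ≤ C * μ z) :
    ∀ z, ∑ k, d k z / ((∑ i ∈ Finset.univ.filter (fun i => i < k), d i z) + C * μ z)
      ≤ 4 * Real.log (2 * K) := by
  intro z
  have hK1 : (1:ℝ) ≤ (K:ℝ) := by exact_mod_cast hK
  have h2K : (1:ℝ) ≤ 2 * K := by linarith
  have hlog2K : 0 ≤ Real.log (2 * K) := Real.log_nonneg h2K
  by_cases hμz : μ z = 0
  · have hzero : ∀ k, d k z = 0 := fun k =>
      le_antisymm (by simpa [hμz] using hratio k z) (hd0 k z)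
    simp [hzero]
    positivity
  · have hμpos : 0 < μ z := lt_of_le_of_ne (hμ0 z) (Ne.symm hμz)
    set M := C * μ z with hMdef
    have hM : 0 < M := by positivity
    set a : ℕ → ℝ := fun n => if h : n < K then d ⟨n, h⟩ z else 0 with ha
    have haeq : ∀ i : Fin K, a (i : ℕ) = d i z := by
      intro i; simp [ha, i.isLt]
    have ha0 : ∀ i, 0 ≤ a i := by
      intro i; simp only [ha]
      split
      · exact hd0 _ z
      · exact le_refl 0
    have haM : ∀ i, a i ≤ M := by
      intro i; simp only [ha]
      split
      · exact hratio _ z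
      · exact hM.le
    have hfilter : ∀ k : Fin K,
        (∑ i ∈ Finset.univ.filter (fun i => i < k), d i z) = ∑ i ∈ range (k : ℕ), a i := by
      intro k
      rw [Finset.sum_filter]
      have h1 : (∑ i : Fin K, if i < k then d i z else 0)
          = ∑ i ∈ range K, (if i < (k:ℕ) then a i else 0) := by
        rw [← Fin.sum_univ_eq_sum_range]
        apply Finset.sum_congr rfl
        intro i _
        simp only [Fin.lt_def, haeq i]
      rw [h1, ← Finset.sum_filter]
      congr 1
      ext i
      simp only [Finset.mem_filter, Finset.mem_range]
      constructor
      · rintro ⟨_, h⟩; exact h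
      · intro h; exact ⟨lt_of_lt_of_le h (Nat.le_of_lt_succ (Nat.lt_succ_of_lt k.isLt)), h⟩
    have hmain : (∑ k, d k z / ((∑ i ∈ Finset.univ.filter (fun i => i < k), d i z) + M))
        = ∑ k ∈ range K, a k / (∑ i ∈ range k, a i + M) := by
      rw [← Fin.sum_univ_eq_sum_range]
      apply Finset.sum_congr rfl
      intro k _
      rw [hfilter k, haeq k]
    rw [hmain]
    have h1 := nat_elliptic a M hM ha0 haM K
    have hSK : ∑ i ∈ range K, a i ≤ K * M := by
      calc ∑ i ∈ range K, a i ≤ ∑ _i ∈ range K, M := Finset.sum_le_sum fun i _ => haM i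
        _ = K * M := by simp [mul_comm]
    have hub : Real.log (∑ i ∈ range K, a i + M) ≤ Real.log (2 * K) + Real.log M := by
      have hpos : 0 < ∑ i ∈ range K, a i + M := by
        have := Finset.sum_nonneg fun i (_ : i ∈ range K) => ha0 i
        linarith
      have hle : ∑ i ∈ range K, a i + M ≤ 2 * K * M := by
        have : (K:ℝ) * M + M ≤ 2 * K * M := by nlinarith
        linarith
      calc Real.log (∑ i ∈ range K, a i + M) ≤ Real.log (2 * K * M) :=
            Real.log_le_log hpos hle
        _ = Real.log (2 * K) + Real.log M := Real.log_mul (by positivity) (by positivity)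
    linarith
end

section
/- Equivalence of robust coverability and cumulative visitation: for each step h ∈ [H], define C^cv_h := ∑_{(s,a)∈S×A} sup_{π∈Π} d^π_h(s,a), where d^π_h is the occupancy of policy π at step h under a fixed family of kernels. Then the coverability coefficient C_cov := inf_{μ_1,…,μ_H ∈ Δ(S×A)} sup_{π∈Π, h∈[H]} ‖d^π_h / μ_h‖_∞ satisfies C_cov = max_{h∈[H]} C^cv_h, and consequently C_cov ≤ |S|·|A|. -/
open scoped ENNReal

/-- equivalence of coverability and cumulative visitation:
`C_cov = inf_μ sup_{π,h} ‖d^π_h/μ_h‖_∞` equals `max_h ∑_{(s,a)} sup_π d^π_h(s,a)`,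
and consequently `C_cov ≤ |S|·|A|`.  (Stated in `ℝ≥0∞`, where `x / 0 = ⊤` for
`x ≠ 0` and `0 / 0 = 0`, matching the density-ratio convention.) -/
theorem coverability_eq_cumulative_visitation
    {S A : Type*} [Fintype S] [Fintype A] (H : ℕ)
    {ι : Type*} [Nonempty ι]
    (d : ι → Fin H → S × A → ℝ≥0∞)
    (hd : ∀ π h, ∑ z, d π h z = 1) :
    (⨅ μ : {μ : Fin H → S × A → ℝ≥0∞ // ∀ h, ∑ z, μ h z = 1},
        ⨆ π : ι, ⨆ h : Fin H, ⨆ z : S × A, d π h z / (μ.1 h z))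
      = (⨆ h : Fin H, ∑ z, ⨆ π : ι, d π h z) ∧
    (⨅ μ : {μ : Fin H → S × A → ℝ≥0∞ // ∀ h, ∑ z, μ h z = 1},
        ⨆ π : ι, ⨆ h : Fin H, ⨆ z : S × A, d π h z / (μ.1 h z))
      ≤ (Fintype.card S : ℝ≥0∞) * (Fintype.card A : ℝ≥0∞) := by
  set C : Fin H → ℝ≥0∞ := fun h => ∑ z, ⨆ π : ι, d π h z with hCdef
  -- each occupancy value is at most 1
  have hdle : ∀ (π : ι) (h : Fin H) (z : S × A), d π h z ≤ 1 := by
    intro π h z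
    calc d π h z ≤ ∑ z, d π h z :=
          Finset.single_le_sum (fun _ _ => zero_le) (Finset.mem_univ z)
      _ = 1 := hd π h
  have hCcard : ∀ h, C h ≤ (Fintype.card S : ℝ≥0∞) * (Fintype.card A : ℝ≥0∞) := by
    intro h
    calc C h ≤ ∑ _z : S × A, (1 : ℝ≥0∞) :=
          Finset.sum_le_sum fun z _ => iSup_le fun π => hdle π h z
      _ = (Fintype.card (S × A) : ℝ≥0∞) := by simp
      _ = _ := by rw [Fintype.card_prod]; push_cast; ring
  have hC1 : ∀ h, 1 ≤ C h := by
    intro h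
    obtain ⟨π⟩ := ‹Nonempty ι›
    calc (1 : ℝ≥0∞) = ∑ z, d π h z := (hd π h).symm
      _ ≤ C h := Finset.sum_le_sum fun z _ => le_iSup (fun π => d π h z) π
  have hCne0 : ∀ h, C h ≠ 0 := fun h h0 => by simpa [h0] using hC1 h
  have hCnetop : ∀ h, C h ≠ ⊤ := fun h =>
    ((hCcard h).trans_lt (ENNReal.mul_lt_top (ENNReal.natCast_lt_top _)
      (ENNReal.natCast_lt_top _))).ne
  -- the candidate optimal μ
  have hμsum : ∀ h, ∑ z, (⨆ π : ι, d π h z) * (C h)⁻¹ = 1 := by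
    intro h
    rw [← Finset.sum_mul]
    exact ENNReal.mul_inv_cancel (hCne0 h) (hCnetop h)
  have hupper :
      (⨅ μ : {μ : Fin H → S × A → ℝ≥0∞ // ∀ h, ∑ z, μ h z = 1},
        ⨆ π : ι, ⨆ h : Fin H, ⨆ z : S × A, d π h z / (μ.1 h z))
      ≤ ⨆ h : Fin H, C h := by
    refine le_trans (iInf_le _ ⟨fun h z => (⨆ π : ι, d π h z) * (C h)⁻¹, hμsum⟩) ?_
    refine iSup_le fun π => iSup_le fun h => iSup_le fun z => ?_
    have hkey : d π h z / ((⨆ π : ι, d π h z) * (C h)⁻¹)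
        = d π h z / (⨆ π : ι, d π h z) * C h := by
      rw [div_eq_mul_inv,
        ENNReal.mul_inv (Or.inr (ENNReal.inv_ne_top.mpr (hCne0 h)))
          (Or.inr (ENNReal.inv_ne_zero.mpr (hCnetop h))),
        inv_inv, ← mul_assoc, div_eq_mul_inv]
    rw [hkey]
    have h1 : d π h z / (⨆ π : ι, d π h z) ≤ 1 :=
      ENNReal.div_le_of_le_mul (by simpa using le_iSup (fun π => d π h z) π)
    calc d π h z / (⨆ π : ι, d π h z) * C h ≤ 1 * C h :=
          mul_le_mul_left h1 _
      _ = C h := one_mul _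
      _ ≤ ⨆ h, C h := le_iSup _ h
  have hlower : (⨆ h : Fin H, C h)
      ≤ ⨅ μ : {μ : Fin H → S × A → ℝ≥0∞ // ∀ h, ∑ z, μ h z = 1},
        ⨆ π : ι, ⨆ h : Fin H, ⨆ z : S × A, d π h z / (μ.1 h z) := by
    refine le_iInf fun μ => iSup_le fun h => ?_
    set R : ℝ≥0∞ := ⨆ π : ι, ⨆ h : Fin H, ⨆ z : S × A, d π h z / (μ.1 h z) with hR
    have hRle : ∀ (π : ι) (z : S × A), d π h z / μ.1 h z ≤ R := by
      intro π z
      calc d π h z / μ.1 h z ≤ ⨆ z, d π h z / μ.1 h z := le_iSup (fun z => d π h z / μ.1 h z) z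
        _ ≤ ⨆ h, ⨆ z, d π h z / μ.1 h z := le_iSup (fun h => ⨆ z, d π h z / μ.1 h z) h
        _ ≤ R := le_iSup (fun π => ⨆ h, ⨆ z, d π h z / μ.1 h z) π
    rcases eq_or_ne R ⊤ with hRtop | hRtop
    · rw [hRtop]; exact le_top
    have hμtop : ∀ z : S × A, μ.1 h z ≠ ⊤ := by
      intro z htop
      have : μ.1 h z ≤ 1 := by
        calc μ.1 h z ≤ ∑ z, μ.1 h z :=
              Finset.single_le_sum (fun _ _ => zero_le) (Finset.mem_univ z)
          _ = 1 := μ.2 h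
      simp [htop] at this
    have hbound : ∀ (z : S × A) (π : ι), d π h z ≤ R * μ.1 h z := by
      intro z π
      rcases eq_or_ne (μ.1 h z) 0 with h0 | h0
      · have hd0 : d π h z = 0 := by
          by_contra hd0
          have : d π h z / μ.1 h z = ⊤ := by
            rw [h0, ENNReal.div_zero hd0]
          exact hRtop (top_le_iff.mp (this ▸ hRle π z))
        simp [hd0]
      · calc d π h z = d π h z / μ.1 h z * μ.1 h z :=
              (ENNReal.div_mul_cancel h0 (hμtop z)).symm
          _ ≤ R * μ.1 h z := mul_le_mul_left (hRle π z) _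
    calc C h ≤ ∑ z, R * μ.1 h z :=
          Finset.sum_le_sum fun z _ => iSup_le fun π => hbound z π
      _ = R * ∑ z, μ.1 h z := by rw [Finset.mul_sum]
      _ = R := by rw [μ.2 h, mul_one]
  have heq := le_antisymm hupper hlower
  exact ⟨heq, heq.trans_le (iSup_le hCcard)⟩
end
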